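/- arXiv:1011.2877 — 2 statements merged into one kernel-verified Lean document; each statement's English description precedes it below -/
import Mathlib

section
/- Let u₁, u₂, u₃ be linearly independent unit vectors in a real inner product space, set ρ_{ab} = ⟨u_a, u_b⟩ and define the partial correlations ρ_{ab|c} = (ρ_{ab} − ρ_{ac} ρ_{bc}) / ((1 − ρ_{ac}²)^{1/2} (1 − ρ_{bc}²)^{1/2}) for {a,b,c} = {1,2,3}. Then arccos ρ₁₂|₃ + arccos ρ₁₃|₂ + arccos ρ₂₃|₁ ≥ π. Consequently, the mixture proportion ω₀ = 1/2 − (1/(4π))[3π − arccos ρ₁₂|₃ − arccos ρ₁₃|₂ − arccos ρ₂₃|₁] is nonnegative. -/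
open Real

lemma sq_inner_lt_of_indep {F : Type*} [NormedAddCommGroup F] [InnerProductSpace ℝ F]
    {x y : F} (h : LinearIndependent ℝ ![x, y]) :
    (inner ℝ x y : ℝ) ^ 2 < ‖x‖ ^ 2 * ‖y‖ ^ 2 := by
  have hx : x ≠ 0 := by
    intro hx0
    exact one_ne_zero (LinearIndependent.pair_iff.1 h 1 0 (by simp [hx0])).1
  have hy : y ≠ 0 := by
    intro hy0
    exact one_ne_zero (LinearIndependent.pair_iff.1 h 0 1 (by simp [hy0])).2
  have hxn : (0:ℝ) < ‖x‖ := norm_pos_iff.2 hx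
  have hyn : (0:ℝ) < ‖y‖ := norm_pos_iff.2 hy
  have h1 : (inner ℝ x y : ℝ) < ‖x‖ * ‖y‖ := by
    refine inner_lt_norm_mul_iff_real.2 ?_
    intro he
    have := (LinearIndependent.pair_iff.1 h ‖y‖ (-‖x‖) (by rw [neg_smul, ← he]; abel)).1
    exact hyn.ne' this
  have h2 : (inner ℝ x (-y) : ℝ) < ‖x‖ * ‖-y‖ := by
    refine inner_lt_norm_mul_iff_real.2 ?_
    intro he
    rw [norm_neg, smul_neg] at he
    have := (LinearIndependent.pair_iff.1 h ‖y‖ ‖x‖ (by rw [he]; abel)).1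
    exact hyn.ne' this
  rw [norm_neg, inner_neg_right, neg_lt] at h2
  have := sq_lt_sq' (by linarith) h1
  calc (inner ℝ x y : ℝ) ^ 2 < (‖x‖ * ‖y‖) ^ 2 := this
    _ = ‖x‖ ^ 2 * ‖y‖ ^ 2 := by ring

set_option maxHeartbeats 1000000 in
/-- For linearly independent unit vectors u₁, u₂, u₃ in a real inner
product space, with ρ_{ab} = ⟨u_a, u_b⟩ and partial correlations
ρ_{ab|c} = (ρ_{ab} − ρ_{ac} ρ_{bc}) / ((1 − ρ_{ac}²)^{1/2} (1 − ρ_{bc}²)^{1/2}),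
one has arccos ρ₁₂|₃ + arccos ρ₁₃|₂ + arccos ρ₂₃|₁ ≥ π; consequently the mixture
proportion ω₀ = 1/2 − (1/(4π))[3π − arccos ρ₁₂|₃ − arccos ρ₁₃|₂ − arccos ρ₂₃|₁]
is nonnegative. -/
theorem partial_correlation_angle_sum_ge_pi_and_omega0_nonneg
    {E : Type*} [NormedAddCommGroup E] [InnerProductSpace ℝ E]
    (u₁ u₂ u₃ : E) (h₁ : ‖u₁‖ = 1) (h₂ : ‖u₂‖ = 1) (h₃ : ‖u₃‖ = 1)
    (hind : LinearIndependent ℝ ![u₁, u₂, u₃])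
    (ρ12 ρ13 ρ23 : ℝ)
    (hρ12 : ρ12 = inner ℝ u₁ u₂) (hρ13 : ρ13 = inner ℝ u₁ u₃) (hρ23 : ρ23 = inner ℝ u₂ u₃)
    (ρ12_3 ρ13_2 ρ23_1 : ℝ)
    (hp1 : ρ12_3 = (ρ12 - ρ13 * ρ23) / (Real.sqrt (1 - ρ13 ^ 2) * Real.sqrt (1 - ρ23 ^ 2)))
    (hp2 : ρ13_2 = (ρ13 - ρ12 * ρ23) / (Real.sqrt (1 - ρ12 ^ 2) * Real.sqrt (1 - ρ23 ^ 2)))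
    (hp3 : ρ23_1 = (ρ23 - ρ12 * ρ13) / (Real.sqrt (1 - ρ12 ^ 2) * Real.sqrt (1 - ρ13 ^ 2)))
    (ω0 : ℝ)
    (hω0 : ω0 = 1 / 2 - (1 / (4 * π)) *
      (3 * π - Real.arccos ρ12_3 - Real.arccos ρ13_2 - Real.arccos ρ23_1)) :
    π ≤ Real.arccos ρ12_3 + Real.arccos ρ13_2 + Real.arccos ρ23_1 ∧ 0 ≤ ω0 := by
  -- pairwise linear independence
  have hpair12 : LinearIndependent ℝ ![u₁, u₂] := by
    rw [LinearIndependent.pair_iff]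
    intro s t hst
    have := Fintype.linearIndependent_iff.1 hind ![s, t, 0]
      (by simpa [Fin.sum_univ_three] using hst)
    exact ⟨this 0, this 1⟩
  have hpair13 : LinearIndependent ℝ ![u₁, u₃] := by
    rw [LinearIndependent.pair_iff]
    intro s t hst
    have := Fintype.linearIndependent_iff.1 hind ![s, 0, t]
      (by simpa [Fin.sum_univ_three] using hst)
    exact ⟨this 0, this 2⟩
  have hpair23 : LinearIndependent ℝ ![u₂, u₃] := by
    rw [LinearIndependent.pair_iff]
    intro s t hst
    have := Fintype.linearIndependent_iff.1 hind ![0, s, t]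
      (by simpa [Fin.sum_univ_three] using hst)
    exact ⟨this 1, this 2⟩
  have ha2 : ρ12 ^ 2 < 1 := by
    have := sq_inner_lt_of_indep hpair12
    rw [h₁, h₂, ← hρ12] at this; linarith
  have hb2 : ρ13 ^ 2 < 1 := by
    have := sq_inner_lt_of_indep hpair13
    rw [h₁, h₃, ← hρ13] at this; linarith
  have hc2 : ρ23 ^ 2 < 1 := by
    have := sq_inner_lt_of_indep hpair23
    rw [h₂, h₃, ← hρ23] at this; linarith
  -- Gram determinant positivity
  have hD : 0 < 1 + 2 * ρ12 * ρ13 * ρ23 - ρ12 ^ 2 - ρ13 ^ 2 - ρ23 ^ 2 := by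
    set v₁ : E := u₁ - ρ13 • u₃ with hv1
    set v₂ : E := u₂ - ρ23 • u₃ with hv2
    have hpairv : LinearIndependent ℝ ![v₁, v₂] := by
      rw [LinearIndependent.pair_iff]
      intro s t hst
      have := Fintype.linearIndependent_iff.1 hind ![s, t, -(s * ρ13 + t * ρ23)]
        (by
          rw [Fin.sum_univ_three]
          simp only [Matrix.cons_val_zero, Matrix.cons_val_one, Matrix.head_cons,
            Matrix.cons_val_two, Matrix.tail_cons]
          rw [hv1, hv2] at hst
          rw [smul_sub, smul_sub, smul_smul, smul_smul] at hst
          rw [neg_smul, add_smul, mul_comm s ρ13, mul_comm t ρ23] at *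
          abel_nf
          abel_nf at hst
          convert hst using 2 <;> module)
      exact ⟨this 0, this 1⟩
    have hCS := sq_inner_lt_of_indep hpairv
    have hn3 : ‖u₃‖ ^ 2 = 1 := by rw [h₃]; norm_num
    have hn3i : (inner ℝ u₃ u₃ : ℝ) = 1 := by
      rw [real_inner_self_eq_norm_sq, h₃]; norm_num
    have hcm : (inner ℝ u₃ u₂ : ℝ) = ρ23 := by rw [real_inner_comm, ← hρ23]
    have hi12 : (inner ℝ v₁ v₂ : ℝ) = ρ12 - ρ13 * ρ23 := by
      rw [hv1, hv2]
      simp only [inner_sub_left, inner_sub_right, real_inner_smul_left, real_inner_smul_right,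
        hn3i, hcm, ← hρ12, ← hρ13]
      ring
    have hn1 : ‖v₁‖ ^ 2 = 1 - ρ13 ^ 2 := by
      rw [hv1, norm_sub_sq_real, real_inner_smul_right, norm_smul, h₁, ← hρ13]
      simp [h₃, mul_pow, sq_abs]
      ring
    have hn2 : ‖v₂‖ ^ 2 = 1 - ρ23 ^ 2 := by
      rw [hv2, norm_sub_sq_real, real_inner_smul_right, norm_smul, h₂, ← hρ23]
      simp [h₃, mul_pow, sq_abs]
      ring
    rw [hi12, hn1, hn2] at hCS
    nlinarith [hCS]
  have ha1 : ρ12 < 1 := (abs_lt.1 ((sq_lt_one_iff_abs_lt_one ρ12).1 ha2)).2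
  have hb1 : ρ13 < 1 := (abs_lt.1 ((sq_lt_one_iff_abs_lt_one ρ13).1 hb2)).2
  have hc1 : ρ23 < 1 := (abs_lt.1 ((sq_lt_one_iff_abs_lt_one ρ23).1 hc2)).2
  set sA := Real.sqrt (1 - ρ12 ^ 2) with hsAdef
  set sB := Real.sqrt (1 - ρ13 ^ 2) with hsBdef
  set sC := Real.sqrt (1 - ρ23 ^ 2) with hsCdef
  set SD := Real.sqrt (1 + 2 * ρ12 * ρ13 * ρ23 - ρ12 ^ 2 - ρ13 ^ 2 - ρ23 ^ 2) with hSDdef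
  have hsA : 0 < sA := Real.sqrt_pos.2 (by linarith)
  have hsB : 0 < sB := Real.sqrt_pos.2 (by linarith)
  have hsC : 0 < sC := Real.sqrt_pos.2 (by linarith)
  have hSD0 : 0 ≤ SD := Real.sqrt_nonneg _
  have hsA2 : sA ^ 2 = 1 - ρ12 ^ 2 := Real.sq_sqrt (by linarith)
  have hsB2 : sB ^ 2 = 1 - ρ13 ^ 2 := Real.sq_sqrt (by linarith)
  have hsC2 : sC ^ 2 = 1 - ρ23 ^ 2 := Real.sq_sqrt (by linarith)
  have hSD2 : SD ^ 2 = 1 + 2 * ρ12 * ρ13 * ρ23 - ρ12 ^ 2 - ρ13 ^ 2 - ρ23 ^ 2 :=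
    Real.sq_sqrt hD.le
  have hq1 : 1 - ρ12_3 ^ 2 = (SD / (sB * sC)) ^ 2 := by
    rw [hp1]
    field_simp
    linear_combination (sC^2) * hsB2 + (1 - ρ13^2) * hsC2 - hSD2
  have hq2 : 1 - ρ13_2 ^ 2 = (SD / (sA * sC)) ^ 2 := by
    rw [hp2]
    field_simp
    linear_combination (sC^2) * hsA2 + (1 - ρ12^2) * hsC2 - hSD2
  have hq3 : 1 - ρ23_1 ^ 2 = (SD / (sA * sB)) ^ 2 := by
    rw [hp3]
    field_simp
    linear_combination (sB^2) * hsA2 + (1 - ρ12^2) * hsB2 - hSD2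
  have hb1' : -1 ≤ ρ12_3 ∧ ρ12_3 ≤ 1 :=
    abs_le.1 ((sq_le_one_iff_abs_le_one ρ12_3).1
      (by linarith [sq_nonneg (SD / (sB * sC)), hq1]))
  have hb2' : -1 ≤ ρ13_2 ∧ ρ13_2 ≤ 1 :=
    abs_le.1 ((sq_le_one_iff_abs_le_one ρ13_2).1
      (by linarith [sq_nonneg (SD / (sA * sC)), hq2]))
  have hb3' : -1 ≤ ρ23_1 ∧ ρ23_1 ≤ 1 :=
    abs_le.1 ((sq_le_one_iff_abs_le_one ρ23_1).1
      (by linarith [sq_nonneg (SD / (sA * sB)), hq3]))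
  set α := Real.arccos ρ12_3 with hα
  set β := Real.arccos ρ13_2 with hβ
  set γ := Real.arccos ρ23_1 with hγ
  have hcosα : Real.cos α = ρ12_3 := Real.cos_arccos hb1'.1 hb1'.2
  have hcosβ : Real.cos β = ρ13_2 := Real.cos_arccos hb2'.1 hb2'.2
  have hcosγ : Real.cos γ = ρ23_1 := Real.cos_arccos hb3'.1 hb3'.2
  have hsinα : Real.sin α = SD / (sB * sC) := by
    rw [hα, Real.sin_arccos, hq1, Real.sqrt_sq (by positivity)]
  have hsinβ : Real.sin β = SD / (sA * sC) := by
    rw [hβ, Real.sin_arccos, hq2, Real.sqrt_sq (by positivity)]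
  have hkey : ρ23_1 ≤ Real.sin α * Real.sin β - Real.cos α * Real.cos β := by
    rw [hsinα, hsinβ, hcosα, hcosβ, hp1, hp2, hp3]
    rw [div_mul_div_comm, div_mul_div_comm, div_sub_div_same,
      div_le_div_iff₀ (by positivity) (by positivity)]
    have hE : (SD * SD - (ρ12 - ρ13 * ρ23) * (ρ13 - ρ12 * ρ23)) * (sA * sB)
        - (ρ23 - ρ12 * ρ13) * (sB * sC * (sA * sC))
        = sA * sB * (1 - ρ23) * (1 + 2 * ρ12 * ρ13 * ρ23 - ρ12 ^ 2 - ρ13 ^ 2 - ρ23 ^ 2) := by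
      linear_combination (sA * sB) * hSD2 - (ρ23 - ρ12 * ρ13) * (sA * sB) * hsC2
    linarith [mul_nonneg (mul_nonneg (mul_nonneg hsA.le hsB.le)
      (by linarith : (0:ℝ) ≤ 1 - ρ23)) hD.le, hE]
  have hsum : π ≤ α + β + γ := by
    rcases le_or_gt π (α + β) with hab | hab
    · have := Real.arccos_nonneg ρ23_1
      rw [← hγ] at this
      linarith
    · by_contra hcon
      push_neg at hcon
      have hγ0 : 0 ≤ γ := Real.arccos_nonneg ρ23_1
      have hγπ : γ ≤ π := Real.arccos_le_pi ρ23_1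
      have hα0 : 0 ≤ α := Real.arccos_nonneg ρ12_3
      have hβ0 : 0 ≤ β := Real.arccos_nonneg ρ13_2
      have hlt : γ < π - α - β := by linarith
      have hmono := Real.strictAntiOn_cos ⟨hγ0, hγπ⟩
        ⟨by linarith, by linarith⟩ hlt
      rw [show π - α - β = π - (α + β) by ring, Real.cos_pi_sub, Real.cos_add,
        hcosγ] at hmono
      linarith
  refine ⟨hsum, ?_⟩
  have hπ := Real.pi_pos
  rw [hω0]
  have hm : 1 / (4 * π) * (3 * π - α - β - γ) ≤ 1 / (4 * π) * (2 * π) :=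
    mul_le_mul_of_nonneg_left (by linarith) (by positivity)
  have he : 1 / (4 * π) * (2 * π) = 1 / 2 := by
    rw [div_mul_eq_mul_div, one_mul, div_eq_div_iff (by positivity) (by norm_num)]
    ring
  linarith
end

section
/- Let Z₁ and Z₂ be independent standard normal random variables on a probability space, let ρ ∈ (−1,1), and set X = Z₁ and Y = ρ Z₁ + (1 − ρ²)^{1/2} Z₂. Then the bivariate quadrant probability equals P(X > 0 and Y > 0) = 1/4 + arcsin(ρ)/(2π). -/
open MeasureTheory ProbabilityTheory Real Set Filter Topology


lemma aux_integral_r : ∫ r in Set.Ioi (0:ℝ), r * Real.exp (-(1/2) * r ^ 2) = 1 := by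
  have A : ∀ x : ℝ, HasDerivAt (fun x : ℝ => -Real.exp (-(1/2) * x ^ 2))
      (x * Real.exp (-(1/2) * x ^ 2)) x := by
    intro x
    convert (((hasDerivAt_pow 2 x).const_mul (-(1/2:ℝ))).exp).neg using 1
    rfl
    rfl
    rfl
    simp
    ring
  have B : Tendsto (fun y : ℝ => -Real.exp (-(1/2) * y ^ 2)) atTop (𝓝 0) := by
    rw [← neg_zero]
    refine Tendsto.neg ?_
    refine Real.tendsto_exp_atBot.comp ?_
    exact (tendsto_pow_atTop two_ne_zero).const_mul_atTop_of_neg (by norm_num)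
  have hint : IntegrableOn (fun x : ℝ => x * Real.exp (-(1/2) * x ^ 2)) (Set.Ioi 0) :=
    (integrable_mul_exp_neg_mul_sq (by norm_num : (0:ℝ) < 1/2)).integrableOn
  have := integral_Ioi_of_hasDerivAt_of_tendsto' (fun x _ => A x) hint B
  simpa using this

lemma aux_angle {ρ : ℝ} (h1 : -1 < ρ) (h2 : ρ < 1) {r θ : ℝ} (hr : 0 < r)
    (hθ1 : -π < θ) (hθ2 : θ < π) :
    (0 < r * Real.cos θ ∧
      0 < ρ * (r * Real.cos θ) + Real.sqrt (1 - ρ ^ 2) * (r * Real.sin θ)) ↔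
      (-Real.arcsin ρ < θ ∧ θ < π / 2) := by
  set α := Real.arcsin ρ with hα
  have hα1 : -(π/2) < α := Real.neg_pi_div_two_lt_arcsin.mpr h1
  have hα2 : α < π/2 := Real.arcsin_lt_pi_div_two.mpr h2
  have hsin : Real.sin α = ρ := Real.sin_arcsin h1.le h2.le
  have hcos : Real.cos α = Real.sqrt (1 - ρ ^ 2) := Real.cos_arcsin ρ
  have hexpr : ρ * (r * Real.cos θ) + Real.sqrt (1 - ρ ^ 2) * (r * Real.sin θ)
      = r * Real.sin (α + θ) := by
    rw [Real.sin_add]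
    linear_combination (-(r * Real.cos θ)) * hsin + (-(r * Real.sin θ)) * hcos
  rw [hexpr]
  have h1' : (0 < r * Real.cos θ) ↔ 0 < Real.cos θ := by
    constructor <;> intro hh <;> nlinarith
  have h2' : (0 < r * Real.sin (α + θ)) ↔ 0 < Real.sin (α + θ) := by
    constructor <;> intro hh <;> nlinarith
  rw [h1', h2']
  constructor
  · rintro ⟨hc, hs⟩
    have hθpi2 : θ < π / 2 := by
      by_contra hcon
      push_neg at hcon
      have : Real.cos θ ≤ 0 :=
        Real.cos_nonpos_of_pi_div_two_le_of_le hcon (by linarith [Real.pi_pos])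
      linarith
    have hθpi2' : -(π/2) < θ := by
      by_contra hcon
      push_neg at hcon
      have : Real.cos (-θ) ≤ 0 :=
        Real.cos_nonpos_of_pi_div_two_le_of_le (by linarith) (by linarith [Real.pi_pos])
      rw [Real.cos_neg] at this
      linarith
    refine ⟨?_, hθpi2⟩
    by_contra hcon
    push_neg at hcon
    have : Real.sin (α + θ) ≤ 0 :=
      Real.sin_nonpos_of_nonpos_of_neg_pi_le (by linarith) (by linarith)
    linarith
  · rintro ⟨hl, hu⟩
    have hcosθ : 0 < Real.cos θ := Real.cos_pos_of_mem_Ioo ⟨by linarith, hu⟩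
    refine ⟨hcosθ, Real.sin_pos_of_pos_of_lt_pi (by linarith) (by linarith)⟩

lemma aux_g (a b : ℝ) :
    gaussianPDFReal 0 1 a * gaussianPDFReal 0 1 b
      = (2 * π)⁻¹ * Real.exp (-(1/2) * (a ^ 2 + b ^ 2)) := by
  simp only [gaussianPDFReal, NNReal.coe_one, mul_one, sub_zero]
  rw [mul_mul_mul_comm, ← Real.exp_add, ← mul_inv,
    Real.mul_self_sqrt (by positivity : (0:ℝ) ≤ 2 * π)]
  ring_nf


/-- For independent standard normal Z₁, Z₂ and ρ ∈ (−1,1), setting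
X = Z₁ and Y = ρ Z₁ + (1 − ρ²)^{1/2} Z₂, the bivariate quadrant probability equals
P(X > 0 and Y > 0) = 1/4 + arcsin(ρ)/(2π). -/
theorem bivariate_normal_quadrant_probability
    {Ω : Type*} [MeasureSpace Ω] [IsProbabilityMeasure (ℙ : Measure Ω)]
    (Z₁ Z₂ : Ω → ℝ)
    (hZ₁ : Measure.map Z₁ ℙ = gaussianReal 0 1)
    (hZ₂ : Measure.map Z₂ ℙ = gaussianReal 0 1)
    (hindep : IndepFun Z₁ Z₂ ℙ)
    (ρ : ℝ) (hρ : ρ ∈ Set.Ioo (-1 : ℝ) 1)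
    (X Y : Ω → ℝ)
    (hX : X = Z₁)
    (hY : Y = fun ω => ρ * Z₁ ω + Real.sqrt (1 - ρ ^ 2) * Z₂ ω) :
    ℙ {ω | 0 < X ω ∧ 0 < Y ω} =
      ENNReal.ofReal (1 / 4 + Real.arcsin ρ / (2 * π)) := by
  obtain ⟨hρ1, hρ2⟩ := hρ
  have hZ₁m : AEMeasurable Z₁ ℙ := by
    by_contra h
    rw [Measure.map_of_not_aemeasurable h] at hZ₁
    have := congrArg (fun m : Measure ℝ => m Set.univ) hZ₁
    simp at this
  have hZ₂m : AEMeasurable Z₂ ℙ := by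
    by_contra h
    rw [Measure.map_of_not_aemeasurable h] at hZ₂
    have := congrArg (fun m : Measure ℝ => m Set.univ) hZ₂
    simp at this
  set μ := gaussianReal 0 1 with hμdef
  have hpair : Measure.map (fun ω => (Z₁ ω, Z₂ ω)) ℙ = μ.prod μ := by
    rw [(indepFun_iff_map_prod_eq_prod_map_map hZ₁m hZ₂m).mp hindep, hZ₁, hZ₂]
  set S : Set (ℝ × ℝ) := {p | 0 < p.1 ∧ 0 < ρ * p.1 + Real.sqrt (1 - ρ ^ 2) * p.2} with hSdef
  have hS : MeasurableSet S := by
    apply MeasurableSet.inter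
    · exact measurableSet_lt measurable_const measurable_fst
    · exact measurableSet_lt measurable_const
        ((measurable_fst.const_mul ρ).add (measurable_snd.const_mul _))
  have hset : {ω | 0 < X ω ∧ 0 < Y ω} = (fun ω => (Z₁ ω, Z₂ ω)) ⁻¹' S := by
    ext ω
    simp [hSdef, hX, hY]
  rw [hset, ← Measure.map_apply_of_aemeasurable (hZ₁m.prodMk hZ₂m) hS, hpair]
  -- density of the product measure
  set g : ℝ × ℝ → ℝ := fun p => gaussianPDFReal 0 1 p.1 * gaussianPDFReal 0 1 p.2 with hgdef
  have hprod : μ.prod μ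
      = (volume : Measure (ℝ × ℝ)).withDensity (fun p => ENNReal.ofReal (g p)) := by
    refine Measure.prod_eq fun s t hs ht => ?_
    rw [withDensity_apply _ (hs.prod ht)]
    have : (volume : Measure (ℝ × ℝ)).restrict (s ×ˢ t)
        = ((volume : Measure ℝ).restrict s).prod ((volume : Measure ℝ).restrict t) := by
      rw [Measure.volume_eq_prod, Measure.prod_restrict]
    rw [this]
    simp_rw [hgdef, ENNReal.ofReal_mul (gaussianPDFReal_nonneg 0 1 _)]
    rw [lintegral_prod_mul
      ((measurable_gaussianPDFReal 0 1).ennreal_ofReal.aemeasurable)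
      ((measurable_gaussianPDFReal 0 1).ennreal_ofReal.aemeasurable)]
    rw [hμdef, gaussianReal_apply 0 one_ne_zero s, gaussianReal_apply 0 one_ne_zero t]
    rfl
  rw [hprod, withDensity_apply _ hS]
  have hgint : Integrable g (volume : Measure (ℝ × ℝ)) := by
    rw [Measure.volume_eq_prod]
    exact (integrable_gaussianPDFReal 0 1).mul_prod (integrable_gaussianPDFReal 0 1)
  rw [← ofReal_integral_eq_lintegral_ofReal hgint.integrableOn
    (Filter.Eventually.of_forall fun p =>
      mul_nonneg (gaussianPDFReal_nonneg 0 1 _) (gaussianPDFReal_nonneg 0 1 _))]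
  congr 1
  -- now the real computation
  set α := Real.arcsin ρ with hαdef
  have hα1 : -(π/2) < α := Real.neg_pi_div_two_lt_arcsin.mpr hρ1
  have hα2 : α < π/2 := Real.arcsin_lt_pi_div_two.mpr hρ2
  calc ∫ p in S, g p ∂volume = ∫ p, S.indicator g p := by
        rw [integral_indicator hS]
    _ = ∫ p in polarCoord.target, p.1 • S.indicator g (polarCoord.symm p) := by
        rw [integral_comp_polarCoord_symm]
    _ = ∫ p in polarCoord.target,
          (p.1 * ((2 * π)⁻¹ * Real.exp (-(1/2) * p.1 ^ 2)))
            * (Set.Ioo (-α) (π/2)).indicator (fun _ => (1:ℝ)) p.2 := by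
        refine setIntegral_congr_fun polarCoord.open_target.measurableSet fun p hp => ?_
        obtain ⟨hr, hθ⟩ := hp
        simp only [polarCoord_target, mem_Ioi] at hr
        simp only [mem_Ioo] at hθ
        have hmem : polarCoord.symm p ∈ S ↔ (-α < p.2 ∧ p.2 < π/2) := by
          rw [polarCoord_symm_apply, hSdef]
          exact aux_angle hρ1 hρ2 hr hθ.1 hθ.2
        by_cases h : polarCoord.symm p ∈ S
        · rw [Set.indicator_of_mem h, Set.indicator_of_mem (by exact hmem.mp h)]
          rw [hgdef]
          simp only [polarCoord_symm_apply]
          rw [aux_g]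
          have : (p.1 * Real.cos p.2) ^ 2 + (p.1 * Real.sin p.2) ^ 2 = p.1 ^ 2 := by
            have := Real.sin_sq_add_cos_sq p.2
            nlinarith
          rw [this, smul_eq_mul]
          ring
        · rw [Set.indicator_of_notMem h,
            Set.indicator_of_notMem (by rw [Set.mem_Ioo]; exact fun hc => h (hmem.mpr hc))]
          simp
    _ = (∫ r in Set.Ioi (0:ℝ), r * ((2 * π)⁻¹ * Real.exp (-(1/2) * r ^ 2)))
          * ∫ θ in Set.Ioo (-π) π, (Set.Ioo (-α) (π/2)).indicator (fun _ => (1:ℝ)) θ := by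
        rw [polarCoord_target, Measure.volume_eq_prod]
        exact setIntegral_prod_mul (fun r : ℝ => r * ((2 * π)⁻¹ * Real.exp (-(1/2) * r ^ 2)))
          ((Set.Ioo (-α) (π/2)).indicator (fun _ => (1:ℝ))) (Set.Ioi 0) (Set.Ioo (-π) π)
    _ = 1 / 4 + α / (2 * π) := by
        have e1 : (∫ r in Set.Ioi (0:ℝ), r * ((2 * π)⁻¹ * Real.exp (-(1/2) * r ^ 2)))
            = (2 * π)⁻¹ := by
          have : ∀ r : ℝ, r * ((2 * π)⁻¹ * Real.exp (-(1/2) * r ^ 2))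
              = (2 * π)⁻¹ * (r * Real.exp (-(1/2) * r ^ 2)) := fun r => by ring
          simp_rw [this]
          rw [integral_const_mul, aux_integral_r, mul_one]
        have e2 : (∫ θ in Set.Ioo (-π) π, (Set.Ioo (-α) (π/2)).indicator (fun _ => (1:ℝ)) θ)
            = π/2 + α := by
          rw [setIntegral_indicator measurableSet_Ioo]
          have : Set.Ioo (-π) π ∩ Set.Ioo (-α) (π/2) = Set.Ioo (-α) (π/2) := by
            rw [Set.Ioo_inter_Ioo, max_eq_right (by linarith [Real.pi_pos]),
              min_eq_right (by linarith [Real.pi_pos])]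
          rw [this, setIntegral_const, smul_eq_mul, mul_one, Real.volume_real_Ioo,
            max_eq_left (by linarith)]
          ring
        rw [e1, e2]
        have hπ : π ≠ 0 := Real.pi_ne_zero
        field_simp
        ring
end
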